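/- Let n ≥ 1, let d_1 ≤ ... ≤ d_r be integers ≥ 2, and let u_1, ..., u_r be nonnegative reals. Fix indices k < k' ≤ r and suppose u_j ≥ u_{k'} + (d_{k'} - d_j) for all k < j ≤ k'. Define β_k = (n + k·u_k + ∑_{j=1}^{k}(d_k - d_j) + ∑_{j>k} u_j)/(d_k + u_k), α_k = k + (n - ∑_{j=1}^k d_j)/d_k, and similarly β_{k'}. If 0 ≤ u_k ≤ u_{k'} + (d_{k'} - d_k), then β_k ≥ min(α_k, β_{k'}). -/
import Mathlib


open Finset

/-- inequality (ineq5): if `u j ≥ u k' + (d k' - d j)` for `k < j ≤ k'`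
and `0 ≤ u k ≤ u k' + (d k' - d k)`, then `β k ≥ min (α k) (β k')`. -/
theorem stmt_9 (n r : ℕ) (hn : 0 < n)
    (d : Fin r → ℕ) (hd : ∀ i, 2 ≤ d i) (hmono : Monotone d)
    (u : Fin r → ℝ) (hu : ∀ j, 0 ≤ u j)
    (β α : Fin r → ℝ)
    (hβ : ∀ m : Fin r, β m = ((n : ℝ) + ((m : ℕ) + 1 : ℝ) * u m +
        (∑ j ∈ Iic m, ((d m : ℝ) - (d j : ℝ))) + ∑ j ∈ Ioi m, u j) / ((d m : ℝ) + u m))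
    (hα : ∀ m : Fin r, α m = ((m : ℕ) + 1 : ℝ) + ((n : ℝ) - ∑ j ∈ Iic m, (d j : ℝ)) / (d m : ℝ))
    (k k' : Fin r) (hkk' : k < k')
    (hbetween : ∀ j : Fin r, k < j → j ≤ k' → u j ≥ u k' + ((d k' : ℝ) - (d j : ℝ)))
    (huk : u k ≤ u k' + ((d k' : ℝ) - (d k : ℝ))) :
    β k ≥ min (α k) (β k') := by
  have hkk : (k:ℕ) < (k':ℕ) := hkk'
  have hDk2 : (2:ℝ) ≤ (d k : ℝ) := by exact_mod_cast hd k
  have hDk'2 : (2:ℝ) ≤ (d k' : ℝ) := by exact_mod_cast hd k'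
  have hEk : (0:ℝ) < (d k : ℝ) + u k := by linarith [hu k]
  have hEk' : (0:ℝ) < (d k' : ℝ) + u k' := by linarith [hu k']
  have hEE : (d k : ℝ) + u k ≤ (d k' : ℝ) + u k' := by linarith
  set A : ℝ := ∑ j ∈ Iic k, (d j : ℝ) with hA
  set A' : ℝ := ∑ j ∈ Iic k', (d j : ℝ) with hA'
  set M : ℝ := ∑ j ∈ Ioc k k', (d j : ℝ) with hM
  set T : ℝ := ∑ j ∈ Ioi k, u j with hT
  set T' : ℝ := ∑ j ∈ Ioi k', u j with hT'
  set U : ℝ := ∑ j ∈ Ioc k k', u j with hU0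
  have hdisj1 : Disjoint (Iic k) (Ioc k k') := by
    rw [Finset.disjoint_left]
    intro a ha hb
    rw [Finset.mem_Iic] at ha
    rw [Finset.mem_Ioc] at hb
    exact absurd hb.1 (not_lt.mpr ha)
  have hdisj2 : Disjoint (Ioc k k') (Ioi k') := by
    rw [Finset.disjoint_left]
    intro a ha hb
    rw [Finset.mem_Ioc] at ha
    rw [Finset.mem_Ioi] at hb
    exact absurd hb (not_lt.mpr ha.2)
  have hsplit1 : Iic k' = Iic k ∪ Ioc k k' := by
    ext x
    simp only [Finset.mem_Iic, Finset.mem_union, Finset.mem_Ioc, Fin.le_def, Fin.lt_def]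
    omega
  have hsplit2 : Ioi k = Ioc k k' ∪ Ioi k' := by
    ext x
    simp only [Finset.mem_Ioi, Finset.mem_union, Finset.mem_Ioc, Fin.le_def, Fin.lt_def]
    omega
  have hAs : A' = A + M := by
    rw [hA', hA, hM, hsplit1, Finset.sum_union hdisj1]
  have hTs : T = U + T' := by
    rw [hT, hT', hU0, hsplit2, Finset.sum_union hdisj2]
  have hTnn : 0 ≤ T' := Finset.sum_nonneg fun j _ => hu j
  have hUnn : 0 ≤ U := Finset.sum_nonneg fun j _ => hu j
  have hTnn0 : 0 ≤ T := by rw [hTs]; linarith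
  have hcIic : ((Iic k).card : ℝ) = (k:ℕ) + 1 := by rw [Fin.card_Iic]; push_cast; ring
  have hcIic' : ((Iic k').card : ℝ) = (k':ℕ) + 1 := by rw [Fin.card_Iic]; push_cast; ring
  have hcIoc : ((Ioc k k').card : ℝ) = (k':ℕ) - (k:ℕ) := by
    rw [Fin.card_Ioc, Nat.cast_sub hkk.le]
  -- key summed hypothesis : c*(u k' + d k') - M ≤ U
  have hUineq : (((k':ℕ):ℝ) - (k:ℕ)) * (u k' + (d k' : ℝ)) - M ≤ U := by
    have h1 : ∑ j ∈ Ioc k k', (u k' + ((d k' : ℝ) - (d j : ℝ))) ≤ U := by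
      rw [hU0]
      apply Finset.sum_le_sum
      intro j hj
      rw [Finset.mem_Ioc] at hj
      exact hbetween j hj.1 hj.2
    have h2 : ∑ j ∈ Ioc k k', (u k' + ((d k' : ℝ) - (d j : ℝ)))
        = (((k':ℕ):ℝ) - (k:ℕ)) * (u k' + (d k' : ℝ)) - M := by
      calc ∑ j ∈ Ioc k k', (u k' + ((d k' : ℝ) - (d j : ℝ)))
          = ∑ j ∈ Ioc k k', ((u k' + (d k' : ℝ)) - (d j : ℝ)) := by
            apply Finset.sum_congr rfl; intros; ring
        _ = ((Ioc k k').card : ℝ) * (u k' + (d k' : ℝ)) - M := by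
            rw [Finset.sum_sub_distrib, Finset.sum_const, nsmul_eq_mul, hM]
        _ = (((k':ℕ):ℝ) - (k:ℕ)) * (u k' + (d k' : ℝ)) - M := by rw [hcIoc]
    linarith [h2 ▸ h1]
  -- closed forms for β as K + C/E
  have hSk : ∑ j ∈ Iic k, ((d k : ℝ) - (d j : ℝ)) = (((k:ℕ):ℝ) + 1) * (d k : ℝ) - A := by
    rw [Finset.sum_sub_distrib, Finset.sum_const, nsmul_eq_mul, hcIic, hA]
  have hSk' : ∑ j ∈ Iic k', ((d k' : ℝ) - (d j : ℝ)) = (((k':ℕ):ℝ) + 1) * (d k' : ℝ) - A' := by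
    rw [Finset.sum_sub_distrib, Finset.sum_const, nsmul_eq_mul, hcIic', hA']
  have hβk : β k = (((k:ℕ):ℝ)+1) + ((n:ℝ) - A + T) / ((d k : ℝ) + u k) := by
    rw [hβ k, hSk]
    field_simp
    ring
  have hβk' : β k' = (((k':ℕ):ℝ)+1) + ((n:ℝ) - A' + T') / ((d k' : ℝ) + u k') := by
    rw [hβ k', hSk']
    field_simp
    ring
  have hαk : α k = (((k:ℕ):ℝ)+1) + ((n:ℝ) - A) / (d k : ℝ) := by rw [hα k]
  rcases le_or_gt ((n:ℝ) - A + T) 0 with hC | hC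
  · -- β k ≥ α k
    have key : ((n:ℝ) - A) / (d k : ℝ) ≤ ((n:ℝ) - A + T) / ((d k : ℝ) + u k) := by
      rw [div_le_div_iff₀ (by linarith) hEk]
      nlinarith [mul_nonneg hTnn0 (by linarith : (0:ℝ) ≤ (d k:ℝ)),
        mul_nonpos_of_nonpos_of_nonneg (by linarith : (n:ℝ) - A ≤ 0) (hu k)]
    have h : α k ≤ β k := by rw [hαk, hβk]; linarith
    exact le_trans (min_le_left _ _) h
  · -- β k ≥ β k'
    have step1 : ((n:ℝ) - A + T) / ((d k' : ℝ) + u k') ≤ ((n:ℝ) - A + T) / ((d k : ℝ) + u k) := by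
      apply div_le_div_of_nonneg_left hC.le hEk hEE
    have step2 : (((k':ℕ):ℝ) - (k:ℕ)) ≤ (((n:ℝ) - A + T) - ((n:ℝ) - A' + T')) / ((d k' : ℝ) + u k') := by
      rw [le_div_iff₀ hEk']
      have : ((n:ℝ) - A + T) - ((n:ℝ) - A' + T') = M + U := by rw [hAs, hTs]; ring
      rw [this]
      linarith [hUineq]
    rw [sub_div] at step2
    have h : β k' ≤ β k := by
      rw [hβk, hβk']
      linarith
    exact le_trans (min_le_right _ _) h
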